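/- arXiv:1909.07538 — 9 statements merged into one kernel-verified Lean document; each statement's English description precedes it below -/
import Mathlib

section
/- Let ≈ be a substring consistent equivalence relation (SCER) on strings over Σ and let f : Σ* → Π* be a prefix encoding with respect to ≈. If P and P' are strings with 1 ≤ j ≤ |P|, 1 ≤ j' ≤ |P'|, and f(P)[:j] = f(P')[:j'], then j = j' and, for every 1 ≤ l ≤ j + 1, f(P[l:j]) = f(P'[l:j]). Consequently the re-encoded suffixes of a state, and hence the failure function and the output function of the SCER automaton, depend only on the state and not on the choice of representative pattern and position. -/
/-- The substring `X[i:j]` (1-indexed, inclusive; `ε` when `j < i`). -/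
def seg {σ : Type*} (X : List σ) (i j : ℕ) : List σ := (X.take j).drop (i - 1)

/-- Let `R` be an SCER and `f` a prefix encoding with respect to `R`.
If `P, P'` are strings with `1 ≤ j ≤ |P|`, `1 ≤ j' ≤ |P'|` and
`f(P)[:j] = f(P')[:j']`, then `j = j'` and for every `1 ≤ l ≤ j + 1` the
re-encoded suffixes agree: `f(P[l:j]) = f(P'[l:j])`.  Hence the re-encoded
suffixes of a state (and so the failure and output functions of the SCER
automaton) depend only on the state, not on the representative. -/
theorem state_well_defined {σ π : Type*} (R : List σ → List σ → Prop)
    (hequiv : Equivalence R)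
    (hlen : ∀ X Y, R X Y → X.length = Y.length)
    (hsub : ∀ X Y, R X Y → ∀ i j, 1 ≤ i → i ≤ j → j ≤ X.length →
      R (seg X i j) (seg Y i j))
    (f : List σ → List π)
    (hf1 : ∀ X, (f X).length = X.length)
    (hf2 : ∀ (X : List σ) (i : ℕ), 1 ≤ i → i ≤ X.length →
      f (X.take i) = (f X).take i)
    (hf3 : ∀ X Y, f X = f Y ↔ R X Y)
    (P P' : List σ) (j j' : ℕ)
    (hj : 1 ≤ j) (hjP : j ≤ P.length) (hj' : 1 ≤ j') (hj'P : j' ≤ P'.length)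
    (heq : (f P).take j = (f P').take j') :
    j = j' ∧ ∀ l, 1 ≤ l → l ≤ j + 1 → f (seg P l j) = f (seg P' l j) := by
  have hjj' : j = j' := by
    have := congrArg List.length heq
    simpa [List.length_take, hf1, Nat.min_eq_left, hjP, hj'P] using this
  subst hjj'
  refine ⟨rfl, fun l hl hlj => ?_⟩
  have hRtake : R (P.take j) (P'.take j) := by
    rw [← hf3, hf2 P j hj hjP, hf2 P' j hj hj'P]; exact heq
  rcases Nat.lt_or_ge l (j + 1) with h | h
  · have hlj' : l ≤ j := Nat.lt_succ_iff.mp h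
    have := hsub _ _ hRtake l j hl hlj'
      (by simp [List.length_take, Nat.min_eq_left, hjP])
    rw [hf3]
    simpa [seg, List.take_take] using this
  · have hl1 : l = j + 1 := le_antisymm hlj h
    subst hl1
    have h1 : seg P (j + 1) j = [] := by
      simp [seg, List.drop_eq_nil_iff, List.length_take]
    have h2 : seg P' (j + 1) j = [] := by
      simp [seg, List.drop_eq_nil_iff, List.length_take]
    rw [h1, h2]
end

section
/- (Lemma 2 of the paper.) Let ≈ be an SCER on strings over Σ, f a prefix encoding with respect to ≈, and D a dictionary. For every P_k ∈ D, every 1 ≤ j ≤ |P_k|, and every 1 ≤ i ≤ j + 1: if f(P_k[i:j]) ∈ Pref(f(D)), then there exists q ≥ 0 such that Fail^q(f(P_k)[:j]) = f(P_k[i:j]). -/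
/-- `Pref(f(D))`: the set of all prefixes (including `ε`) of the encoded
patterns; these are the states of the SCER automaton of `D`. -/
def PrefSet {σ π : Type*} (f : List σ → List π) (D : Finset (List σ)) :
    Set (List π) :=
  {S | ∃ P ∈ D, S <+: f P}

/-- The index `i = min {l | 1 < l ≤ j + 1, f(P[l:j]) ∈ Pref(f(D))}` used in the
definition of the failure function. -/
noncomputable def failIdx {σ π : Type*} (f : List σ → List π)
    (D : Finset (List σ)) (P : List σ) (j : ℕ) : ℕ :=
  sInf {l | 1 < l ∧ l ≤ j + 1 ∧ f (seg P l j) ∈ PrefSet f D}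

/-- Lemma 2.  Let `R` be an SCER, `f` a prefix encoding w.r.t. `R`, `D` a
dictionary, and `Fail` the failure function of the SCER automaton (any function
satisfying the defining equation `Fail(f(P)[:j]) = f(P[i:j])` with
`i = min {l | 1 < l ≤ j + 1, f(P[l:j]) ∈ Pref(f(D))}`).  For every `P_k ∈ D`,
`1 ≤ j ≤ |P_k|` and `1 ≤ i ≤ j + 1`: if `f(P_k[i:j]) ∈ Pref(f(D))`, then there
exists `q ≥ 0` with `Fail^q(f(P_k)[:j]) = f(P_k[i:j])`. -/
theorem fail_reaches_suffix {σ π : Type*} (R : List σ → List σ → Prop)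
    (hequiv : Equivalence R)
    (hlen : ∀ X Y, R X Y → X.length = Y.length)
    (hsub : ∀ X Y, R X Y → ∀ i j, 1 ≤ i → i ≤ j → j ≤ X.length →
      R (seg X i j) (seg Y i j))
    (f : List σ → List π)
    (hf1 : ∀ X, (f X).length = X.length)
    (hf2 : ∀ (X : List σ) (i : ℕ), 1 ≤ i → i ≤ X.length →
      f (X.take i) = (f X).take i)
    (hf3 : ∀ X Y, f X = f Y ↔ R X Y)
    (D : Finset (List σ))
    (Fail : List π → List π)
    (hFail : ∀ P ∈ D, ∀ j : ℕ, 1 ≤ j → j ≤ P.length →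
      Fail ((f P).take j) = f (seg P (failIdx f D P j) j))
    (P_k : List σ) (hPk : P_k ∈ D) (j i : ℕ)
    (hj : 1 ≤ j) (hjP : j ≤ P_k.length) (hi : 1 ≤ i) (hij : i ≤ j + 1)
    (hmem : f (seg P_k i j) ∈ PrefSet f D) :
    ∃ q : ℕ, Fail^[q] ((f P_k).take j) = f (seg P_k i j) := by
  suffices key : ∀ n : ℕ, ∀ P ∈ D, ∀ i : ℕ, 1 ≤ n → n ≤ P.length → 1 ≤ i →
      i ≤ n + 1 → f (seg P i n) ∈ PrefSet f D →
      ∃ q : ℕ, Fail^[q] ((f P).take n) = f (seg P i n) by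
    exact key j P_k hPk i hj hjP hi hij hmem
  intro n
  induction n using Nat.strong_induction_on with
  | _ n IH =>
    intro P hP i hn hnP hi hin hmem
    rcases eq_or_lt_of_le hi with h1 | h1
    · -- i = 1
      refine ⟨0, ?_⟩
      simp only [Function.iterate_zero, id_eq]
      have : seg P i n = P.take n := by
        subst h1; simp [seg]
      rw [this, hf2 P n hn hnP]
    · -- i ≥ 2
      have hiS : i ∈ {l | 1 < l ∧ l ≤ n + 1 ∧ f (seg P l n) ∈ PrefSet f D} :=
        ⟨h1, hin, hmem⟩
      have hi'S : failIdx f D P n ∈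
          {l | 1 < l ∧ l ≤ n + 1 ∧ f (seg P l n) ∈ PrefSet f D} :=
        Nat.sInf_mem ⟨i, hiS⟩
      set i' := failIdx f D P n with hi'def
      obtain ⟨hi'1, hi'n, hi'mem⟩ := hi'S
      have hi'le : i' ≤ i := Nat.sInf_le hiS
      have hstep : Fail ((f P).take n) = f (seg P i' n) :=
        hFail P hP n hn hnP
      rcases eq_or_lt_of_le hi'le with heq | hlt
      · exact ⟨1, by rw [Function.iterate_one, hstep, heq]⟩
      · -- i' < i
        have hi'j : i' ≤ n := by omega
        obtain ⟨P', hP', hpref⟩ := hi'mem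
        set m := n - (i' - 1) with hmdef
        have hseglen : (seg P i' n).length = m := by
          simp [seg, hmdef]; omega
        have hflen : (f (seg P i' n)).length = m := by
          rw [hf1]; exact hseglen
        have hmpos : 1 ≤ m := by omega
        have hmlt : m < n := by omega
        have hmle' : m ≤ P'.length := by
          have := hpref.length_le
          rw [hflen, hf1] at this; exact this
        have htake : f (seg P i' n) = (f P').take m := by
          have := List.prefix_iff_eq_take.mp hpref
          rw [hflen] at this; exact this
        have htake2 : (f P').take m = f (P'.take m) := by
          rw [hf2 P' m hmpos hmle']
        have hR : R (seg P i' n) (P'.take m) := by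
          rw [← hf3]; rw [htake, htake2]
        set i₂ := i - (i' - 1) with hi2def
        have hi2pos : 1 ≤ i₂ := by omega
        have hi2le : i₂ ≤ m + 1 := by omega
        -- seg composition: seg (seg P i' n) i₂ m = seg P i n ... = seg P i n
        have hsegseg : seg (seg P i' n) i₂ m = seg P i n := by
          simp only [seg]
          have h1' : (((P.take n).drop (i' - 1)).take m) = (P.take n).drop (i' - 1) := by
            have : ((P.take n).drop (i' - 1)).length = m := hseglen
            rw [← this, List.take_length]
          rw [h1', List.drop_drop]
          congr 1
          omega
        have hsegtake : seg (P'.take m) i₂ m = seg P' i₂ m := by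
          simp [seg, List.take_take]
        have hkey : f (seg P' i₂ m) = f (seg P i n) := by
          rcases eq_or_lt_of_le hi2le with he | hl
          · -- i₂ = m + 1 : both segments empty
            have e1 : seg P' i₂ m = [] := by
              simp [seg]
              omega
            have e2 : seg P i n = [] := by
              simp [seg]
              omega
            rw [e1, e2]
          · have hi2m : i₂ ≤ m := by omega
            have := hsub _ _ hR i₂ m hi2pos hi2m (le_of_eq hseglen.symm)
            rw [hsegseg, hsegtake] at this
            rw [hf3]
            exact hequiv.symm this
        have hmem' : f (seg P' i₂ m) ∈ PrefSet f D := by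
          rw [hkey]; exact hmem
        obtain ⟨q, hq⟩ := IH m hmlt P' hP' i₂ hmpos hmle' hi2pos hi2le hmem'
        refine ⟨q + 1, ?_⟩
        rw [Function.iterate_succ_apply, hstep, htake, hq, hkey]
end

section
/- (Lemma 3 of the paper.) Let ≈ be an SCER on strings over Σ, f a prefix encoding with respect to ≈, and D a dictionary. Let P_k ∈ D and 1 ≤ j < |P_k|, and write Fail(f(P_k)[:j+1]) = f(P_k[i:j+1]) for the minimal admissible i. If Fail(f(P_k)[:j+1]) ≠ ε (equivalently i ≤ j + 1), then there exists q ≥ 0 such that Fail^q(f(P_k)[:j]) = f(P_k[i:j]), i.e., some iterate of the failure function applied to f(P_k)[:j] equals the parent (the prefix of length one less) of Fail(f(P_k)[:j+1]). -/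
/-! ### Auxiliary lemmas -/

lemma seg_length {σ : Type*} (X : List σ) (a b : ℕ) (hb : b ≤ X.length) :
    (seg X a b).length = b - (a - 1) := by
  unfold seg
  rw [List.length_drop, List.length_take, min_eq_left hb]

lemma seg_one {σ : Type*} (X : List σ) (b : ℕ) : seg X 1 b = X.take b := by
  simp [seg]

lemma seg_eq_nil {σ : Type*} (X : List σ) (a b : ℕ) (h : b ≤ a - 1) :
    seg X a b = [] := by
  apply List.drop_eq_nil_of_le
  rw [List.length_take]
  exact le_trans (min_le_left _ _) h

lemma seg_seg {σ : Type*} (X : List σ) (a c t b : ℕ) (ha : 1 ≤ a) (ht : 1 ≤ t)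
    (hbc : a - 1 + b ≤ c) :
    seg (seg X a c) t b = seg X (a - 1 + t) (a - 1 + b) := by
  unfold seg
  rw [List.take_drop, List.drop_drop, List.take_take, min_eq_left hbc]
  congr 1
  omega

lemma seg_take {σ : Type*} (X : List σ) (a b c : ℕ) (hab : a ≤ b + 1)
    (hbc : b ≤ c) :
    (seg X a c).take (b - (a - 1)) = seg X a b := by
  unfold seg
  rw [List.take_drop]
  have h : a - 1 + (b - (a - 1)) = b := by omega
  rw [h, List.take_take, min_eq_left hbc]

lemma failIdx_mem {σ π : Type*} (f : List σ → List π) (D : Finset (List σ))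
    (P : List σ) (j : ℕ)
    (hne : {l | 1 < l ∧ l ≤ j + 1 ∧ f (seg P l j) ∈ PrefSet f D}.Nonempty) :
    1 < failIdx f D P j ∧ failIdx f D P j ≤ j + 1 ∧
      f (seg P (failIdx f D P j) j) ∈ PrefSet f D :=
  Nat.sInf_mem hne

lemma failIdx_le {σ π : Type*} (f : List σ → List π) (D : Finset (List σ))
    (P : List σ) (j l : ℕ)
    (hl : 1 < l ∧ l ≤ j + 1 ∧ f (seg P l j) ∈ PrefSet f D) :
    failIdx f D P j ≤ l :=
  Nat.sInf_le hl

/-- Lemma 3.  Let `R` be an SCER, `f` a prefix encoding w.r.t. `R`, `D` a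
dictionary, and `Fail` the failure function of the SCER automaton.  Let
`P_k ∈ D`, `1 ≤ j < |P_k|`, and write `Fail(f(P_k)[:j+1]) = f(P_k[i:j+1])`
with `i = failIdx f D P_k (j+1)` minimal.  If `Fail(f(P_k)[:j+1]) ≠ ε`, then
there is `q ≥ 0` such that `Fail^q(f(P_k)[:j]) = f(P_k[i:j])`, i.e. some
iterate of the failure function at `f(P_k)[:j]` equals the parent of
`Fail(f(P_k)[:j+1])`. -/
theorem fail_parent_in_chain {σ π : Type*} (R : List σ → List σ → Prop)
    (hequiv : Equivalence R)
    (hlen : ∀ X Y, R X Y → X.length = Y.length)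
    (hsub : ∀ X Y, R X Y → ∀ i j, 1 ≤ i → i ≤ j → j ≤ X.length →
      R (seg X i j) (seg Y i j))
    (f : List σ → List π)
    (hf1 : ∀ X, (f X).length = X.length)
    (hf2 : ∀ (X : List σ) (i : ℕ), 1 ≤ i → i ≤ X.length →
      f (X.take i) = (f X).take i)
    (hf3 : ∀ X Y, f X = f Y ↔ R X Y)
    (D : Finset (List σ))
    (Fail : List π → List π)
    (hFail : ∀ P ∈ D, ∀ j : ℕ, 1 ≤ j → j ≤ P.length →
      Fail ((f P).take j) = f (seg P (failIdx f D P j) j))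
    (P_k : List σ) (hPk : P_k ∈ D) (j : ℕ)
    (hj : 1 ≤ j) (hjP : j < P_k.length)
    (hne : Fail ((f P_k).take (j + 1)) ≠ []) :
    ∃ q : ℕ, Fail^[q] ((f P_k).take j) =
      f (seg P_k (failIdx f D P_k (j + 1)) j) := by
  classical
  have hfnil : f ([] : List σ) = [] := by
    have := hf1 ([] : List σ)
    exact List.length_eq_zero_iff.mp this
  have hnilP : ([] : List π) ∈ PrefSet f D := ⟨P_k, hPk, List.nil_prefix⟩
  have hclosed : ∀ {S S' : List π}, S ∈ PrefSet f D → S' <+: S →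
      S' ∈ PrefSet f D := by
    rintro S S' ⟨P, hP, hp⟩ h
    exact ⟨P, hP, h.trans hp⟩
  set i := failIdx f D P_k (j + 1) with hidef
  have hU : 1 < i ∧ i ≤ (j + 1) + 1 ∧ f (seg P_k i (j + 1)) ∈ PrefSet f D := by
    rw [hidef]
    exact failIdx_mem f D P_k (j + 1)
      ⟨j + 2, by omega, le_rfl, by
        rw [seg_eq_nil P_k (j + 2) (j + 1) (by omega), hfnil]; exact hnilP⟩
  obtain ⟨hi1, hi2, hiP⟩ := hU
  have hij : i ≤ j + 1 := by
    by_contra h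
    apply hne
    rw [hFail P_k hPk (j + 1) (by omega) (by omega), ← hidef,
      seg_eq_nil P_k i (j + 1) (by omega), hfnil]
  -- the parent `f(P_k[i:j])` is a state
  have hparent : f (seg P_k i j) ∈ PrefSet f D := by
    rcases eq_or_lt_of_le hij with h | h
    · rw [seg_eq_nil P_k i j (by omega), hfnil]; exact hnilP
    · have hlen1 : (seg P_k i (j + 1)).length = (j + 1) - (i - 1) :=
        seg_length _ _ _ (by omega)
      have h1 : f (seg P_k i j) = (f (seg P_k i (j + 1))).take (j - (i - 1)) := by
        rw [← hf2 (seg P_k i (j + 1)) (j - (i - 1)) (by omega)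
            (by rw [hlen1]; omega),
          seg_take P_k i j (j + 1) (by omega) (by omega)]
      rw [h1]
      exact hclosed hiP (List.take_prefix _ _)
  -- one step of the failure function along the chain of `f(P_k)[:j]`
  have step : ∀ l : ℕ, 1 ≤ l → l ≤ j → f (seg P_k l j) ∈ PrefSet f D →
      ∃ l', l < l' ∧ l' ≤ j + 1 ∧ f (seg P_k l' j) ∈ PrefSet f D ∧
        (∀ s, l < s → s ≤ j + 1 → f (seg P_k s j) ∈ PrefSet f D → l' ≤ s) ∧
        Fail (f (seg P_k l j)) = f (seg P_k l' j) := by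
    intro l hl1 hlj hP
    obtain ⟨P', hP', hpre⟩ := hP
    set m := j + 1 - l with hm
    have hm1 : 1 ≤ m := by omega
    have hsegl : (seg P_k l j).length = m := by
      rw [seg_length _ _ _ (le_of_lt hjP)]; omega
    have hflen : (f (seg P_k l j)).length = m := by rw [hf1, hsegl]
    have hmP' : m ≤ P'.length := by
      have := hpre.length_le
      rw [hflen, hf1] at this
      exact this
    have htake : f (seg P_k l j) = (f P').take m := by
      have := List.prefix_iff_eq_take.mp hpre
      rwa [hflen] at this
    have heq : f (P'.take m) = f (seg P_k l j) := by
      rw [hf2 P' m hm1 hmP', htake]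
    have hR : R (P'.take m) (seg P_k l j) := (hf3 _ _).mp heq
    have htrans : ∀ t, 1 ≤ t → t ≤ m + 1 →
        f (seg P' t m) = f (seg P_k (l - 1 + t) j) := by
      intro t ht1 ht2
      rcases eq_or_lt_of_le ht2 with h | h
      · rw [seg_eq_nil P' t m (by omega), seg_eq_nil P_k (l - 1 + t) j (by omega)]
      · have htm : t ≤ m := by omega
        have hRseg := hsub _ _ hR t m ht1 htm
          (by rw [List.length_take]; exact le_min le_rfl hmP')
        have e1 : seg (P'.take m) t m = seg P' t m := by
          unfold seg
          rw [List.take_take, min_self]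
        have e2 : seg (seg P_k l j) t m = seg P_k (l - 1 + t) j := by
          rw [seg_seg P_k l j t m hl1 ht1 (by omega)]
          have hlm : l - 1 + m = j := by omega
          rw [hlm]
        rw [e1, e2] at hRseg
        exact (hf3 _ _).mpr hRseg
    have hT : 1 < failIdx f D P' m ∧ failIdx f D P' m ≤ m + 1 ∧
        f (seg P' (failIdx f D P' m) m) ∈ PrefSet f D :=
      failIdx_mem f D P' m
        ⟨m + 1, by omega, le_rfl, by
          rw [seg_eq_nil P' (m + 1) m (by omega), hfnil]; exact hnilP⟩
    obtain ⟨hi'1, hi'2, hi'P⟩ := hT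
    refine ⟨l - 1 + failIdx f D P' m, by omega, by omega, ?_, ?_, ?_⟩
    · rw [← htrans _ (by omega) hi'2]
      exact hi'P
    · intro s hs1 hs2 hsP
      have hmem : 1 < s - (l - 1) ∧ s - (l - 1) ≤ m + 1 ∧
          f (seg P' (s - (l - 1)) m) ∈ PrefSet f D := by
        refine ⟨by omega, by omega, ?_⟩
        rw [htrans (s - (l - 1)) (by omega) (by omega)]
        have hs : l - 1 + (s - (l - 1)) = s := by omega
        rw [hs]
        exact hsP
      have := failIdx_le f D P' m _ hmem
      omega
    · rw [htake, hFail P' hP' m hm1 hmP', htrans _ (by omega) hi'2]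
  -- walk down the failure chain until we reach the parent
  have main : ∀ d l, 1 ≤ l → l ≤ i → i - l ≤ d → f (seg P_k l j) ∈ PrefSet f D →
      (∃ q, Fail^[q] ((f P_k).take j) = f (seg P_k l j)) →
      ∃ q, Fail^[q] ((f P_k).take j) = f (seg P_k i j) := by
    intro d
    induction d with
    | zero =>
      intro l h1 h2 h3 _ hreach
      have hl : l = i := by omega
      rwa [hl] at hreach
    | succ d ih =>
      intro l h1 h2 h3 hP hreach
      rcases eq_or_lt_of_le h2 with h | h
      · rwa [h] at hreach
      · have hlj : l ≤ j := by omega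
        obtain ⟨l', hll', hl'j, hl'P, hmin, hFeq⟩ := step l h1 hlj hP
        have hl'i : l' ≤ i := hmin i h (by omega) hparent
        obtain ⟨q, hq⟩ := hreach
        exact ih l' (by omega) hl'i (by omega) hl'P
          ⟨q + 1, by rw [Function.iterate_succ_apply', hq, hFeq]⟩
  have h0 : f (seg P_k 1 j) = (f P_k).take j := by
    rw [seg_one, hf2 P_k j hj (le_of_lt hjP)]
  exact main (i - 1) 1 le_rfl (by omega) (by omega)
    (by rw [h0]; exact ⟨P_k, hPk, List.take_prefix _ _⟩)
    ⟨0, by rw [Function.iterate_zero_apply, h0]⟩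
end

section
/- (Lemma 4 of the paper.) Let ≈ be an SCER on strings over Σ, f a prefix encoding with respect to ≈, and D a dictionary. For every P_k ∈ D, every 1 ≤ j ≤ |P_k|, and every pattern P ∈ Out(f(P_k)[:j]), there exists q ≥ 0 such that f(P) = Fail^q(f(P_k)[:j]). -/
lemma seg_take_s6 {σ : Type*} (X : List σ) (l m : ℕ) :
    seg (X.take m) l m = seg X l m := by
  simp [seg, List.take_take]

lemma seg_seg_s6 {σ : Type*} (X : List σ) (i' l j : ℕ) (hi' : 1 ≤ i') (hl : 1 ≤ l) :
    seg (seg X i' j) l (j - i' + 1) = seg X (i' + l - 1) j := by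
  unfold seg
  rw [List.take_of_length_le, List.drop_drop]
  · congr 1
    omega
  · simp only [List.length_drop, List.length_take]
    omega

lemma seg_len {σ : Type*} (X : List σ) (i j : ℕ) (hj : j ≤ X.length) :
    (seg X i j).length = j - (i - 1) := by
  simp [seg]; omega

/-- Lemma 4.  Let `R` be an SCER, `f` a prefix encoding w.r.t. `R`, `D` a
dictionary and `Fail` the failure function of the SCER automaton.  For every
`P_k ∈ D`, every `1 ≤ j ≤ |P_k|` and every pattern
`P ∈ Out(f(P_k)[:j]) = {P ∈ D | P ≈ P_k[i:j] for some 1 ≤ i ≤ j}`, there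
exists `q ≥ 0` such that `f(P) = Fail^q(f(P_k)[:j])`. -/
theorem out_in_fail_chain {σ π : Type*} (R : List σ → List σ → Prop)
    (hequiv : Equivalence R)
    (hlen : ∀ X Y, R X Y → X.length = Y.length)
    (hsub : ∀ X Y, R X Y → ∀ i j, 1 ≤ i → i ≤ j → j ≤ X.length →
      R (seg X i j) (seg Y i j))
    (f : List σ → List π)
    (hf1 : ∀ X, (f X).length = X.length)
    (hf2 : ∀ (X : List σ) (i : ℕ), 1 ≤ i → i ≤ X.length →
      f (X.take i) = (f X).take i)
    (hf3 : ∀ X Y, f X = f Y ↔ R X Y)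
    (D : Finset (List σ))
    (Fail : List π → List π)
    (hFail : ∀ P ∈ D, ∀ j : ℕ, 1 ≤ j → j ≤ P.length →
      Fail ((f P).take j) = f (seg P (failIdx f D P j) j))
    (P_k : List σ) (hPk : P_k ∈ D) (j : ℕ)
    (hj : 1 ≤ j) (hjP : j ≤ P_k.length)
    (P : List σ) (hPD : P ∈ D)
    (hout : ∃ i, 1 ≤ i ∧ i ≤ j ∧ R P (seg P_k i j)) :
    ∃ q : ℕ, f P = Fail^[q] ((f P_k).take j) := by
  obtain ⟨i0, hi01, hi0j, hR0⟩ := hout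
  have hfP : f P = f (seg P_k i0 j) := (hf3 _ _).2 hR0
  suffices h : ∀ i, 1 ≤ i → i ≤ j → f (seg P_k i j) ∈ PrefSet f D →
      ∃ q, f (seg P_k i j) = Fail^[q] ((f P_k).take j) by
    obtain ⟨q, hq⟩ := h i0 hi01 hi0j ⟨P, hPD, by rw [← hfP]⟩
    exact ⟨q, hfP.trans hq⟩
  intro i
  induction i using Nat.strong_induction_on with
  | _ i ih =>
    intro hi1 hij hpref
    rcases eq_or_lt_of_le hi1 with h1 | h1
    · -- base case i = 1
      refine ⟨0, ?_⟩
      have hseg1 : seg P_k 1 j = P_k.take j := by simp [seg]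
      rw [← h1, Function.iterate_zero, id, hseg1, hf2 P_k j hj hjP]
    · -- inductive step, i > 1
      set T : Set ℕ := {l | l < i ∧ 1 ≤ l ∧ f (seg P_k l j) ∈ PrefSet f D} with hT
      have h1T : 1 ∈ T := by
        refine ⟨h1, le_refl 1, ?_⟩
        have hseg1 : seg P_k 1 j = P_k.take j := by simp [seg]
        rw [hseg1, hf2 P_k j hj hjP]
        exact ⟨P_k, hPk, List.take_prefix _ _⟩
      have hbdd : BddAbove T := ⟨i, fun l hl => hl.1.le⟩
      set i' := sSup T with hi'
      have hi'T : i' ∈ T := Nat.sSup_mem ⟨1, h1T⟩ hbdd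
      have hi'1 : 1 ≤ i' := hi'T.2.1
      have hi'lt : i' < i := hi'T.1
      obtain ⟨P', hP'D, hpre⟩ := hi'T.2.2
      set m := j - i' + 1 with hm
      have hm1 : 1 ≤ m := by omega
      have hlenseg : (f (seg P_k i' j)).length = m := by
        rw [hf1, seg_len _ _ _ hjP]; omega
      have hmP' : m ≤ P'.length := by
        have := hpre.length_le
        rw [hlenseg, hf1] at this
        exact this
      have hfp' : f (seg P_k i' j) = (f P').take m := by
        rw [List.prefix_iff_eq_take.mp hpre, hlenseg]
      have htake : f (P'.take m) = (f P').take m := hf2 P' m hm1 hmP'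
      have hRm : R (P'.take m) (seg P_k i' j) :=
        (hf3 _ _).1 (htake.trans hfp'.symm)
      -- correspondence of segments
      have hcorr : ∀ l, 1 ≤ l → l ≤ m + 1 →
          f (seg P' l m) = f (seg P_k (i' + l - 1) j) := by
        intro l hl1 hlm
        rcases eq_or_lt_of_le hlm with hl | hl
        · -- l = m + 1 : both segments are empty
          have h1 : seg P' l m = [] := by
            simp only [seg, List.drop_eq_nil_iff, List.length_take]
            omega
          have h2 : seg P_k (i' + l - 1) j = [] := by
            simp only [seg, List.drop_eq_nil_iff, List.length_take]
            omega
          rw [h1, h2]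
        · have hlm' : l ≤ m := by omega
          have hseg' : seg P' l m = seg (P'.take m) l m := (seg_take_s6 _ _ _).symm
          have hlen' : m ≤ (P'.take m).length := by
            simp only [List.length_take]; omega
          have := hsub _ _ hRm l m hl1 hlm' hlen'
          rw [seg_seg_s6 P_k i' l j hi'1 hl1] at this
          rw [hseg']
          exact (hf3 _ _).2 this
      -- compute failIdx
      set l0 := i - i' + 1 with hl0
      have hfidx : failIdx f D P' m = l0 := by
        have hmem : l0 ∈ {l | 1 < l ∧ l ≤ m + 1 ∧ f (seg P' l m) ∈ PrefSet f D} := by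
          refine ⟨by omega, by omega, ?_⟩
          rw [hcorr l0 (by omega) (by omega)]
          have : i' + l0 - 1 = i := by omega
          rw [this]
          exact hpref
        refine le_antisymm (Nat.sInf_le hmem) ?_
        refine le_csInf ⟨l0, hmem⟩ ?_
        intro l hl
        by_contra hcon
        push_neg at hcon
        have hl1 : 1 < l := hl.1
        have hlmem : i' + l - 1 ∈ T := by
          refine ⟨by omega, by omega, ?_⟩
          rw [← hcorr l (by omega) hl.2.1]
          exact hl.2.2
        have := le_csSup hbdd hlmem
        omega
      -- one Fail step
      have hstep : Fail (f (seg P_k i' j)) = f (seg P_k i j) := by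
        rw [hfp', hFail P' hP'D m hm1 hmP', hfidx, hcorr l0 (by omega) (by omega)]
        congr 2
        omega
      obtain ⟨q', hq'⟩ := ih i' hi'lt hi'1 (by omega) hi'T.2.2
      refine ⟨q' + 1, ?_⟩
      rw [Function.iterate_succ_apply', ← hq', hstep]
end

section
/- (Lemma 5 of the paper.) Let ≈ be an SCER on strings over Σ, f a prefix encoding with respect to ≈, and D a dictionary. For every state S = f(P_k)[:j] with P_k ∈ D and 1 ≤ j ≤ |P_k| (so S ≠ ε): if S ∈ f(D), then Out(S) = {P ∈ D | f(P) = S} ∪ Out(Fail(S)); otherwise Out(S) = Out(Fail(S)). -/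
/-- Lemma 5.  Let `R` be an SCER, `f` a prefix encoding w.r.t. `R` and `D` a
dictionary.  Consider a state `S = f(P_k)[:j]` with `P_k ∈ D` and
`1 ≤ j ≤ |P_k|` (so `S ≠ ε`).  Here
`Out S = {Q ∈ D | Q ≈ P_k[l:j] for some 1 ≤ l ≤ j}`, and since
`Fail S = f(P_k[i₀:j])` with `i₀ = failIdx f D P_k j`, its output set is
`Out (Fail S) = {Q ∈ D | Q ≈ P_k[l:j] for some i₀ ≤ l ≤ j}`.  Then:
if `S ∈ f(D)` then `Out S = {P ∈ D | f P = S} ∪ Out (Fail S)`,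
and otherwise `Out S = Out (Fail S)`. -/
theorem out_recurrence {σ π : Type*} (R : List σ → List σ → Prop)
    (hequiv : Equivalence R)
    (hlen : ∀ X Y, R X Y → X.length = Y.length)
    (hsub : ∀ X Y, R X Y → ∀ i j, 1 ≤ i → i ≤ j → j ≤ X.length →
      R (seg X i j) (seg Y i j))
    (f : List σ → List π)
    (hf1 : ∀ X, (f X).length = X.length)
    (hf2 : ∀ (X : List σ) (i : ℕ), 1 ≤ i → i ≤ X.length →
      f (X.take i) = (f X).take i)
    (hf3 : ∀ X Y, f X = f Y ↔ R X Y)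
    (D : Finset (List σ))
    (P_k : List σ) (hPk : P_k ∈ D) (j : ℕ)
    (hj : 1 ≤ j) (hjP : j ≤ P_k.length) :
    ((∃ Q ∈ D, f Q = (f P_k).take j) →
      {Q | Q ∈ D ∧ ∃ l, 1 ≤ l ∧ l ≤ j ∧ R Q (seg P_k l j)} =
        {Q | Q ∈ D ∧ f Q = (f P_k).take j} ∪
          {Q | Q ∈ D ∧ ∃ l, failIdx f D P_k j ≤ l ∧ l ≤ j ∧ R Q (seg P_k l j)}) ∧
    (¬ (∃ Q ∈ D, f Q = (f P_k).take j) →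
      {Q | Q ∈ D ∧ ∃ l, 1 ≤ l ∧ l ≤ j ∧ R Q (seg P_k l j)} =
        {Q | Q ∈ D ∧ ∃ l, failIdx f D P_k j ≤ l ∧ l ≤ j ∧ R Q (seg P_k l j)}) := by

  have hseg1 : seg P_k 1 j = P_k.take j := by simp [seg]
  have hS : f (P_k.take j) = (f P_k).take j := hf2 _ j hj hjP
  -- the failIdx set is nonempty (witness j+1)
  have hnil : f ([] : List σ) = [] := List.length_eq_zero_iff.mp (by simp [hf1])
  have hsegj1 : seg P_k (j+1) j = [] := by
    simp [seg, List.drop_eq_nil_iff]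
  have hne : {l | 1 < l ∧ l ≤ j + 1 ∧ f (seg P_k l j) ∈ PrefSet f D}.Nonempty := by
    refine ⟨j+1, by omega, le_refl _, ?_⟩
    exact ⟨P_k, hPk, by rw [hsegj1, hnil]; exact List.nil_prefix⟩
  have hmem := Nat.sInf_mem hne
  set i₀ := failIdx f D P_k j with hi₀
  have hi1 : 1 < i₀ := hmem.1
  have hmin : ∀ l Q, 1 < l → l ≤ j → Q ∈ D → f Q = f (seg P_k l j) → i₀ ≤ l := by
    intro l Q h1 h2 hQ hfQ
    exact Nat.sInf_le ⟨h1, by omega, ⟨Q, hQ, hfQ ▸ List.prefix_refl _⟩⟩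
  constructor
  · intro _
    ext Q
    simp only [Set.mem_setOf_eq, Set.mem_union]
    constructor
    · rintro ⟨hQ, l, hl1, hlj, hR⟩
      rcases eq_or_lt_of_le hl1 with h | h
      · left
        refine ⟨hQ, ?_⟩
        have : f Q = f (seg P_k l j) := (hf3 _ _).mpr hR
        rw [this, ← h, hseg1, hS]
      · right
        exact ⟨hQ, l, hmin l Q h hlj hQ ((hf3 _ _).mpr hR), hlj, hR⟩
    · rintro (⟨hQ, hfQ⟩ | ⟨hQ, l, hl1, hlj, hR⟩)
      · refine ⟨hQ, 1, le_refl _, hj, ?_⟩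
        rw [hseg1]
        exact (hf3 _ _).mp (by rw [hfQ, hS])
      · exact ⟨hQ, l, by omega, hlj, hR⟩
  · intro hnex
    ext Q
    simp only [Set.mem_setOf_eq]
    constructor
    · rintro ⟨hQ, l, hl1, hlj, hR⟩
      rcases eq_or_lt_of_le hl1 with h | h
      · exfalso
        apply hnex
        refine ⟨Q, hQ, ?_⟩
        have : f Q = f (seg P_k l j) := (hf3 _ _).mpr hR
        rw [this, ← h, hseg1, hS]
      · exact ⟨hQ, l, hmin l Q h hlj hQ ((hf3 _ _).mpr hR), hlj, hR⟩
    · rintro ⟨hQ, l, hl1, hlj, hR⟩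
      exact ⟨hQ, l, by omega, hlj, hR⟩
end

section
/- (Converse direction of Lemma 2, implicit in the paper's proofs.) Let ≈ be an SCER on strings over Σ, f a prefix encoding with respect to ≈, and D a dictionary. For every P_k ∈ D, every 1 ≤ j ≤ |P_k|, and every q ≥ 0, there exists i with 1 ≤ i ≤ j + 1 such that Fail^q(f(P_k)[:j]) = f(P_k[i:j]); that is, every element of the failure chain of the state f(P_k)[:j] is the encoding of a suffix of P_k[:j] and lies in Pref(f(D)). -/
/-- Converse direction of Lemma 2.  Let `R` be an SCER, `f` a prefix encoding
w.r.t. `R`, `D` a dictionary, and `Fail` the failure function of the SCER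
automaton, extended by `Fail ε = ε`.  For every `P_k ∈ D`, `1 ≤ j ≤ |P_k|` and
`q ≥ 0`, there is `i` with `1 ≤ i ≤ j + 1` such that
`Fail^q(f(P_k)[:j]) = f(P_k[i:j])`; i.e. every element of the failure chain of
the state `f(P_k)[:j]` is the encoding of a suffix of `P_k[:j]` and lies in
`Pref(f(D))`. -/
theorem fail_chain_is_suffix {σ π : Type*} (R : List σ → List σ → Prop)
    (hequiv : Equivalence R)
    (hlen : ∀ X Y, R X Y → X.length = Y.length)
    (hsub : ∀ X Y, R X Y → ∀ i j, 1 ≤ i → i ≤ j → j ≤ X.length →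
      R (seg X i j) (seg Y i j))
    (f : List σ → List π)
    (hf1 : ∀ X, (f X).length = X.length)
    (hf2 : ∀ (X : List σ) (i : ℕ), 1 ≤ i → i ≤ X.length →
      f (X.take i) = (f X).take i)
    (hf3 : ∀ X Y, f X = f Y ↔ R X Y)
    (D : Finset (List σ))
    (Fail : List π → List π)
    (hFail : ∀ P ∈ D, ∀ j : ℕ, 1 ≤ j → j ≤ P.length →
      Fail ((f P).take j) = f (seg P (failIdx f D P j) j))
    (hFailNil : Fail [] = [])
    (P_k : List σ) (hPk : P_k ∈ D) (j : ℕ)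
    (hj : 1 ≤ j) (hjP : j ≤ P_k.length) (q : ℕ) :
    ∃ i, 1 ≤ i ∧ i ≤ j + 1 ∧ Fail^[q] ((f P_k).take j) = f (seg P_k i j) ∧
      f (seg P_k i j) ∈ PrefSet f D := by

  have hfnil : f ([] : List σ) = [] := by
    have h := hf1 ([] : List σ)
    simpa using List.length_eq_zero_iff.mp (by simpa using h)
  have hsegnilPk : seg P_k (j+1) j = [] := by
    simp [seg]
  induction q with
  | zero =>
    refine ⟨1, le_refl 1, by omega, ?_, ?_⟩
    · have : seg P_k 1 j = P_k.take j := by simp [seg]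
      rw [this, Function.iterate_zero, id, ← hf2 P_k j hj hjP]
    · have : seg P_k 1 j = P_k.take j := by simp [seg]
      rw [this, hf2 P_k j hj hjP]
      exact ⟨P_k, hPk, List.take_prefix _ _⟩
  | succ q ih =>
    obtain ⟨i, hi1, hij, heq, hmem⟩ := ih
    rw [Function.iterate_succ_apply', heq]
    by_cases hile : i ≤ j
    · -- main case: nonempty state
      obtain ⟨P, hP, hpref⟩ := hmem
      set m := j + 1 - i with hm
      have hm1 : 1 ≤ m := by omega
      have hseglen : (seg P_k i j).length = m := by
        simp [seg]
        omega
      have hSlen : (f (seg P_k i j)).length = m := by rw [hf1, hseglen]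
      have hmP : m ≤ P.length := by
        have := hpref.length_le
        rw [hSlen, hf1] at this
        exact this
      have hStake : f (seg P_k i j) = (f P).take m := by
        have := List.prefix_iff_eq_take.mp hpref
        rwa [hSlen] at this
      have hStake' : f (seg P_k i j) = f (P.take m) := by
        rw [hStake, hf2 P m hm1 hmP]
      -- failure index
      have hne : ({l | 1 < l ∧ l ≤ m + 1 ∧ f (seg P l m) ∈ PrefSet f D} : Set ℕ).Nonempty := by
        refine ⟨m + 1, by omega, le_refl _, ?_⟩
        have : seg P (m+1) m = [] := by
          simp [seg]
        rw [this, hfnil]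
        exact ⟨P_k, hPk, List.nil_prefix⟩
      set l := failIdx f D P m with hl
      have hlmem : 1 < l ∧ l ≤ m + 1 ∧ f (seg P l m) ∈ PrefSet f D := by
        rw [hl]; unfold failIdx; exact Nat.sInf_mem hne
      obtain ⟨hl1, hlm, hlpref⟩ := hlmem
      have hFailS : Fail (f (seg P_k i j)) = f (seg P l m) := by
        rw [hStake', hf2 P m hm1 hmP, hFail P hP m hm1 hmP]
      by_cases hlm' : l ≤ m
      · -- translate seg P l m back to a suffix of P_k[:j]
        have hR : R (seg P_k i j) (P.take m) := (hf3 _ _).mp hStake'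
        have hRsub := hsub _ _ hR l m (by omega) hlm' (le_of_eq hseglen.symm)
        have e1 : seg (P.take m) l m = seg P l m := by
          simp [seg, List.take_take]
        have e0 : (List.drop (i-1) (List.take j P_k)).take m
            = List.drop (i-1) (List.take j P_k) :=
          List.take_of_length_le (le_of_eq hseglen)
        have e2 : seg (seg P_k i j) l m = seg P_k (i + l - 1) j := by
          simp only [seg]
          rw [e0, List.drop_drop]
          congr 1
          omega
        rw [e1, e2] at hRsub
        have hfeq : f (seg P_k (i + l - 1) j) = f (seg P l m) := (hf3 _ _).mpr hRsub
        refine ⟨i + l - 1, by omega, by omega, hFailS.trans hfeq.symm, ?_⟩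
        rw [hfeq]; exact hlpref
      · -- l = m + 1, the state becomes empty
        have hl' : l = m + 1 := by omega
        have hsegnilP : seg P l m = [] := by
          rw [hl']; simp [seg]
        refine ⟨j + 1, by omega, le_refl _, ?_, ?_⟩
        · rw [hFailS, hsegnilP, hfnil, hsegnilPk, hfnil]
        · rw [hsegnilPk, hfnil]
          exact ⟨P_k, hPk, List.nil_prefix⟩
    · -- i = j + 1 : empty state
      have hi : i = j + 1 := by omega
      subst hi
      refine ⟨j+1, by omega, le_refl _, ?_, ?_⟩
      · rw [hsegnilPk, hfnil, hFailNil]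
      · rw [hsegnilPk, hfnil]
        exact ⟨P_k, hPk, List.nil_prefix⟩
end

section
/- (Correctness of dictionary matching via the output function, from the proof of Theorem 2.) Let ≈ be an SCER on strings over Σ, f a prefix encoding with respect to ≈, D a dictionary, and T a text. For 1 ≤ i ≤ |T|, let V(i) = f(T[i−L(i)+1:i]) where L(i) is the largest s ≥ 0 with f(T[i−s+1:i]) ∈ Pref(f(D)). Then for every pattern P ∈ D and every position o with 1 ≤ o ≤ |T| − |P| + 1: P ≈ T[o:o+|P|−1] if and only if P ∈ Out(V(o+|P|−1)), where for V(i) = f(T[j:i]) one defines Out(V(i)) = {Q ∈ D | Q ≈ T[l:i] for some j ≤ l ≤ i}. -/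
/-- `L(i)`: the largest length `s ≥ 0` of a suffix `T[i-s+1:i]` of `T[:i]`
whose encoding lies in `Pref(f(D))`. -/
noncomputable def Llen {σ π : Type*} (f : List σ → List π)
    (D : Finset (List σ)) (T : List σ) (i : ℕ) : ℕ :=
  sSup {s | s ≤ i ∧ f (seg T (i - s + 1) i) ∈ PrefSet f D}

/-- Correctness of dictionary matching via the output function (from the proof
of Theorem 2).  Let `R` be an SCER, `f` a prefix encoding w.r.t. `R`, `D` a
dictionary and `T` a text.  For `1 ≤ i ≤ |T|`, the state reached after reading
`T[:i]` is `V(i) = f(T[i-L(i)+1:i])`, whose output set is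
`Out(V(i)) = {Q ∈ D | Q ≈ T[l:i] for some i-L(i)+1 ≤ l ≤ i}`.  Then for every
(nonempty) pattern `P ∈ D` and every position `o` with
`1 ≤ o ≤ |T| - |P| + 1`:  `P ≈ T[o:o+|P|-1]` iff `P ∈ Out(V(o+|P|-1))`. -/
theorem matching_correct {σ π : Type*} (R : List σ → List σ → Prop)
    (hequiv : Equivalence R)
    (hlen : ∀ X Y, R X Y → X.length = Y.length)
    (hsub : ∀ X Y, R X Y → ∀ i j, 1 ≤ i → i ≤ j → j ≤ X.length →
      R (seg X i j) (seg Y i j))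
    (f : List σ → List π)
    (hf1 : ∀ X, (f X).length = X.length)
    (hf2 : ∀ (X : List σ) (i : ℕ), 1 ≤ i → i ≤ X.length →
      f (X.take i) = (f X).take i)
    (hf3 : ∀ X Y, f X = f Y ↔ R X Y)
    (D : Finset (List σ)) (T : List σ)
    (P : List σ) (hPD : P ∈ D) (hPne : 1 ≤ P.length)
    (o : ℕ) (ho : 1 ≤ o) (hoT : o + P.length ≤ T.length + 1) :
    R P (seg T o (o + P.length - 1)) ↔
      (P ∈ D ∧ ∃ l,
        (o + P.length - 1) - Llen f D T (o + P.length - 1) + 1 ≤ l ∧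
        l ≤ o + P.length - 1 ∧ R P (seg T l (o + P.length - 1))) := by
  set i := o + P.length - 1 with hi
  constructor
  · intro h
    refine ⟨hPD, o, ?_, by omega, h⟩
    have hio : i - P.length + 1 = o := by omega
    have hmem : P.length ∈ {s | s ≤ i ∧ f (seg T (i - s + 1) i) ∈ PrefSet f D} := by
      refine ⟨by omega, ?_⟩
      rw [hio]
      exact ⟨P, hPD, by rw [(hf3 P _).mpr h]⟩
    have hbdd : BddAbove {s | s ≤ i ∧ f (seg T (i - s + 1) i) ∈ PrefSet f D} :=
      ⟨i, fun s hs => hs.1⟩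
    have hL : P.length ≤ Llen f D T i := le_csSup hbdd hmem
    omega
  · rintro ⟨-, l, hl1, hl2, hR⟩
    have hlen' := hlen _ _ hR
    have hseg : (seg T l i).length = min i T.length - (l - 1) := by
      simp [seg]
    have hlo : l = o := by omega
    rwa [hlo] at hR
end

section
/- The prev-encoding characterizes parameterized matching: for strings X, Y over an alphabet Π, prev(X) = prev(Y) if and only if there exists a bijection π : Π → Π such that Y = π(X) (i.e., Y[i] = π(X[i]) for all i). Hence the prev-encoding is a prefix encoding with respect to the parameterized-matching relation. -/
open Classical

/-- The prev-encoding: `prev(X)[i] = i - max{j | 1 ≤ j < i, X[j] = X[i]}` if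
such a `j` exists, and `0` otherwise (positions 1-indexed; here computed with
0-indexed positions `k`, which yields the same distances). -/
noncomputable def prevEnc {Γ : Type*} (X : List Γ) : List ℕ :=
  (List.range X.length).map fun k =>
    if (∃ j, j < k ∧ X[j]? = X[k]?) then
      k - sSup {j | j < k ∧ X[j]? = X[k]?}
    else 0

/-- The entry function of the prev-encoding. -/
noncomputable def prevEncF {Γ : Type*} (X : List Γ) (k : ℕ) : ℕ :=
  if (∃ j, j < k ∧ X[j]? = X[k]?) then
    k - sSup {j | j < k ∧ X[j]? = X[k]?}
  else 0

lemma prevEnc_eq_map {Γ : Type*} (X : List Γ) :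
    prevEnc X = (List.range X.length).map (prevEncF X) := rfl

lemma prevEncF_congr {Γ Γ' : Type*} (X : List Γ) (Y : List Γ') (k : ℕ)
    (hpat : ∀ j ≤ k, (X[j]? = X[k]? ↔ Y[j]? = Y[k]?)) : prevEncF X k = prevEncF Y k := by
  have hset : {j | j < k ∧ X[j]? = X[k]?} = {j | j < k ∧ Y[j]? = Y[k]?} := by
    ext j
    simp only [Set.mem_setOf_eq, and_congr_right_iff]
    intro hj
    exact hpat j hj.le
  have hcond : (∃ j, j < k ∧ X[j]? = X[k]?) ↔ (∃ j, j < k ∧ Y[j]? = Y[k]?) := by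
    constructor
    · rintro ⟨j, hj, he⟩; exact ⟨j, hj, (hpat j hj.le).mp he⟩
    · rintro ⟨j, hj, he⟩; exact ⟨j, hj, (hpat j hj.le).mpr he⟩
  unfold prevEncF
  rw [hset]
  exact if_congr hcond rfl rfl

lemma prevEncF_pos {Γ : Type*} (X : List Γ) (k : ℕ) (h : ∃ j, j < k ∧ X[j]? = X[k]?) :
    0 < prevEncF X k ∧ sSup {j | j < k ∧ X[j]? = X[k]?} ∈ {j | j < k ∧ X[j]? = X[k]?} ∧
      prevEncF X k = k - sSup {j | j < k ∧ X[j]? = X[k]?} := by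
  have hbdd : BddAbove {j | j < k ∧ X[j]? = X[k]?} := ⟨k, fun j hj => hj.1.le⟩
  have hmem := Nat.sSup_mem (s := {j | j < k ∧ X[j]? = X[k]?}) h hbdd
  refine ⟨?_, hmem, ?_⟩ <;> simp only [prevEncF, if_pos h]
  · exact Nat.sub_pos_of_lt hmem.1

lemma pattern_of_prevEncF {Γ : Type*} {X Y : List Γ}
    (hF : ∀ k < X.length, prevEncF X k = prevEncF Y k) :
    ∀ (k j : ℕ), k < X.length → j < k → (X[j]? = X[k]? ↔ Y[j]? = Y[k]?) := by
  intro k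
  induction k using Nat.strong_induction_on with
  | _ k IH =>
    intro j hkn hj
    by_cases hX : ∃ j, j < k ∧ X[j]? = X[k]?
    · have hY : ∃ j, j < k ∧ Y[j]? = Y[k]? := by
        by_contra hY
        have h1 := (prevEncF_pos X k hX).1
        have h2 : prevEncF Y k = 0 := by simp only [prevEncF, if_neg hY]
        rw [hF k hkn] at h1; omega
      obtain ⟨hXpos, hXmem, hXval⟩ := prevEncF_pos X k hX
      obtain ⟨hYpos, hYmem, hYval⟩ := prevEncF_pos Y k hY
      set mX := sSup {j | j < k ∧ X[j]? = X[k]?} with hmX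
      set mY := sSup {j | j < k ∧ Y[j]? = Y[k]?} with hmY
      have hm : mX = mY := by
        have := hF k hkn
        rw [hXval, hYval] at this
        have h1 : mX < k := hXmem.1
        have h2 : mY < k := hYmem.1
        omega
      have hXmax : ∀ i, i < k → X[i]? = X[k]? → i ≤ mX := fun i h1 h2 =>
        le_csSup ⟨k, fun j hj => hj.1.le⟩ ⟨h1, h2⟩
      have hYmax : ∀ i, i < k → Y[i]? = Y[k]? → i ≤ mY := fun i h1 h2 =>
        le_csSup ⟨k, fun j hj => hj.1.le⟩ ⟨h1, h2⟩
      rcases lt_trichotomy j mX with hlt | heq | hgt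
      · have e1 : (X[j]? = X[k]?) ↔ (X[j]? = X[mX]?) := by rw [hXmem.2]
        have e2 : (Y[j]? = Y[k]?) ↔ (Y[j]? = Y[mY]?) := by rw [hYmem.2]
        rw [e1, e2, ← hm]
        exact IH mX hXmem.1 j (hXmem.1.trans hkn) hlt
      · subst heq
        exact iff_of_true hXmem.2 (hm ▸ hYmem.2)
      · constructor
        · intro he; exact absurd (hXmax j hj he) (by omega)
        · intro he; exact absurd (hYmax j hj he) (by omega)
    · have hY : ¬ ∃ j, j < k ∧ Y[j]? = Y[k]? := by
        by_contra hY
        have h1 := (prevEncF_pos Y k hY).1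
        have h2 : prevEncF X k = 0 := by simp only [prevEncF, if_neg hX]
        rw [← hF k hkn] at h1; omega
      constructor
      · intro he; exact absurd ⟨j, hj, he⟩ hX
      · intro he; exact absurd ⟨j, hj, he⟩ hY

lemma pattern_full {Γ : Type*} {X Y : List Γ} (hlen : X.length = Y.length)
    (hpat : ∀ (k j : ℕ), k < X.length → j < k → (X[j]? = X[k]? ↔ Y[j]? = Y[k]?)) :
    ∀ j k : ℕ, (X[j]? = X[k]? ↔ Y[j]? = Y[k]?) := by
  have key : ∀ j k : ℕ, j < k → (X[j]? = X[k]? ↔ Y[j]? = Y[k]?) := by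
    intro j k hjk
    by_cases hk : k < X.length
    · exact hpat k j hk hjk
    · have hxk : X[k]? = none := List.getElem?_eq_none (by omega)
      have hyk : Y[k]? = none := List.getElem?_eq_none (by omega)
      rw [hxk, hyk]
      by_cases hjn : j < X.length
      · constructor
        · intro h; exact absurd h (by simp [List.getElem?_eq_getElem hjn])
        · intro h; exact absurd h (by simp [List.getElem?_eq_getElem (show j < Y.length by omega)])
      · have hx : X[j]? = none := List.getElem?_eq_none (by omega)
        have hy : Y[j]? = none := List.getElem?_eq_none (by omega)
        rw [hx, hy]
  intro j k
  rcases lt_trichotomy j k with h | h | h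
  · exact key j k h
  · subst h; simp
  · exact eq_comm.trans ((key k j h).trans eq_comm.symm)

lemma exists_perm_of_pattern {Γ : Type*} {X Y : List Γ} (hlen : X.length = Y.length)
    (E : ∀ j k : ℕ, X[j]? = X[k]? ↔ Y[j]? = Y[k]?) :
    ∃ e : Equiv.Perm Γ, Y = X.map ⇑e := by
  classical
  have getlt : ∀ (Z : List Γ) (k : ℕ) (c : Γ), Z[k]? = some c → k < Z.length := by
    intro Z k c hk
    by_contra h
    rw [List.getElem?_eq_none (by omega)] at hk
    cases hk
  set f : Γ → Γ := fun c =>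
    if h : ∃ k : ℕ, X[k]? = some c then (Y[h.choose]?).getD c else c with hf
  have P1 : ∀ (k : ℕ) (c : Γ), X[k]? = some c → Y[k]? = some (f c) := by
    intro k c hk
    have hex : ∃ k : ℕ, X[k]? = some c := ⟨k, hk⟩
    have hm : X[hex.choose]? = some c := hex.choose_spec
    have hY : Y[hex.choose]? = Y[k]? := (E hex.choose k).mp (hm.trans hk.symm)
    have hkY : k < Y.length := hlen ▸ getlt X k c hk
    have hYk : Y[k]? = some (Y[k]'hkY) := List.getElem?_eq_getElem hkY
    have hfc : f c = Y[k]'hkY := by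
      rw [hf]
      simp only [dif_pos hex]
      rw [hY, hYk]
      rfl
    rw [hfc, hYk]
  set A : Finset Γ := X.toFinset with hA
  set B : Finset Γ := Y.toFinset with hB
  have memA : ∀ c, c ∈ A ↔ ∃ k : ℕ, X[k]? = some c := by
    intro c; rw [hA, List.mem_toFinset, List.mem_iff_getElem?]
  have memB : ∀ c, c ∈ B ↔ ∃ k : ℕ, Y[k]? = some c := by
    intro c; rw [hB, List.mem_toFinset, List.mem_iff_getElem?]
  have himg : B = A.image f := by
    ext d
    rw [memB, Finset.mem_image]
    constructor
    · rintro ⟨k, hk⟩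
      have hkX : k < X.length := hlen ▸ getlt Y k d hk
      refine ⟨X[k]'hkX, (memA _).mpr ⟨k, List.getElem?_eq_getElem hkX⟩, ?_⟩
      have := P1 k (X[k]'hkX) (List.getElem?_eq_getElem hkX)
      rw [hk] at this
      exact (Option.some.inj this).symm
    · rintro ⟨c, hcA, rfl⟩
      obtain ⟨k, hk⟩ := (memA c).mp hcA
      exact ⟨k, P1 k c hk⟩
  have hinj : Set.InjOn f ↑A := by
    intro c hc d hd hcd
    obtain ⟨j, hj⟩ := (memA c).mp (Finset.mem_coe.mp hc)
    obtain ⟨k, hk⟩ := (memA d).mp (Finset.mem_coe.mp hd)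
    have h1 := P1 j c hj
    have h2 := P1 k d hk
    have hYjk : Y[j]? = Y[k]? := by rw [h1, h2, hcd]
    have hXjk : X[j]? = X[k]? := (E j k).mpr hYjk
    rw [hj, hk] at hXjk
    exact Option.some.inj hXjk
  have hcardAB : A.card = B.card := by rw [himg, Finset.card_image_of_injOn hinj]
  have hcard : (B \ A).card = (A \ B).card := by
    have h1 := Finset.card_sdiff_add_card_inter B A
    have h2 := Finset.card_sdiff_add_card_inter A B
    rw [Finset.inter_comm] at h1
    omega
  set h0 := Finset.equivOfCardEq hcard with hh0
  set π : Γ → Γ := fun c =>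
    if hcA : c ∈ A then f c
    else if hcB : c ∈ B then ((h0 ⟨c, Finset.mem_sdiff.mpr ⟨hcB, hcA⟩⟩ : ↥(A \ B)) : Γ)
    else c with hπ
  have hπA : ∀ c ∈ A, π c = f c := by
    intro c hc; rw [hπ]; exact dif_pos hc
  have hπB : ∀ (c : Γ) (h1 : c ∉ A) (h2 : c ∈ B),
      π c = ((h0 ⟨c, Finset.mem_sdiff.mpr ⟨h2, h1⟩⟩ : ↥(A \ B)) : Γ) := by
    intro c h1 h2; rw [hπ]; simp only [dif_neg h1, dif_pos h2]
  have hπC : ∀ (c : Γ), c ∉ A → c ∉ B → π c = c := by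
    intro c h1 h2; rw [hπ]; simp only [dif_neg h1, dif_neg h2]
  have hfAB : ∀ c ∈ A, f c ∈ B := by
    intro c hc; rw [himg]; exact Finset.mem_image_of_mem f hc
  have hπBmem : ∀ (c : Γ) (h1 : c ∉ A) (h2 : c ∈ B), π c ∈ A ∧ π c ∉ B := by
    intro c h1 h2
    rw [hπB c h1 h2]
    have := (h0 ⟨c, Finset.mem_sdiff.mpr ⟨h2, h1⟩⟩).2
    exact Finset.mem_sdiff.mp this
  have hinjπ : Function.Injective π := by
    intro c d hcd
    by_cases hcA : c ∈ A <;> by_cases hdA : d ∈ A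
    · rw [hπA c hcA, hπA d hdA] at hcd
      exact hinj (Finset.mem_coe.mpr hcA) (Finset.mem_coe.mpr hdA) hcd
    · by_cases hdB : d ∈ B
      · exfalso
        rw [hπA c hcA] at hcd
        have h1 := hfAB c hcA
        rw [hcd] at h1
        exact (hπBmem d hdA hdB).2 h1
      · exfalso
        rw [hπA c hcA, hπC d hdA hdB] at hcd
        exact hdB (hcd ▸ hfAB c hcA)
    · by_cases hcB : c ∈ B
      · exfalso
        rw [hπA d hdA] at hcd
        have h1 := hfAB d hdA
        rw [← hcd] at h1
        exact (hπBmem c hcA hcB).2 h1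
      · exfalso
        rw [hπA d hdA, hπC c hcA hcB] at hcd
        exact hcB (hcd.symm ▸ hfAB d hdA)
    · by_cases hcB : c ∈ B <;> by_cases hdB : d ∈ B
      · rw [hπB c hcA hcB, hπB d hdA hdB] at hcd
        have := h0.injective (Subtype.coe_injective hcd)
        exact congrArg Subtype.val this
      · exfalso
        rw [hπC d hdA hdB] at hcd
        exact hdA (hcd ▸ (hπBmem c hcA hcB).1)
      · exfalso
        rw [hπC c hcA hcB] at hcd
        exact hcA (hcd.symm ▸ (hπBmem d hdA hdB).1)
      · rw [hπC c hcA hcB, hπC d hdA hdB] at hcd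
        exact hcd
  have hsurjπ : Function.Surjective π := by
    intro d
    by_cases hdB : d ∈ B
    · rw [himg] at hdB
      obtain ⟨c, hc, rfl⟩ := Finset.mem_image.mp hdB
      exact ⟨c, hπA c hc⟩
    · by_cases hdA : d ∈ A
      · have hd' : d ∈ A \ B := Finset.mem_sdiff.mpr ⟨hdA, hdB⟩
        set x := h0.symm ⟨d, hd'⟩ with hx
        have hxBA : (x : Γ) ∈ B \ A := x.2
        have hxB : (x : Γ) ∈ B := (Finset.mem_sdiff.mp hxBA).1
        have hxA : (x : Γ) ∉ A := (Finset.mem_sdiff.mp hxBA).2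
        refine ⟨(x : Γ), ?_⟩
        rw [hπB (x : Γ) hxA hxB]
        have heta : (⟨(x : Γ), Finset.mem_sdiff.mpr ⟨hxB, hxA⟩⟩ : ↥(B \ A)) = x :=
          Subtype.coe_eta x _
        rw [heta, hx, Equiv.apply_symm_apply]
      · exact ⟨d, hπC d hdA hdB⟩
  refine ⟨Equiv.ofBijective π ⟨hinjπ, hsurjπ⟩, ?_⟩
  apply List.ext_getElem (by simpa using hlen.symm)
  intro k h1 h2
  rw [List.getElem_map]
  show Y[k]'h1 = π (X[k]'(by simpa using h2))
  have hkX : k < X.length := by simpa using h2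
  have hcA : X[k]'hkX ∈ A := (memA _).mpr ⟨k, List.getElem?_eq_getElem hkX⟩
  rw [hπA _ hcA]
  have hp := P1 k (X[k]'hkX) (List.getElem?_eq_getElem hkX)
  rw [List.getElem?_eq_getElem h1] at hp
  exact Option.some.inj hp

/-- The prev-encoding characterizes parameterized matching:
`prev(X) = prev(Y)` iff there is a bijection `π : Π → Π` with `Y = π(X)`
pointwise.  Together with the length and prefix conditions, the prev-encoding
is therefore a prefix encoding with respect to the parameterized-matching
relation. -/
theorem prevEnc_prefix_encoding {Γ : Type*} :
    (∀ X : List Γ, (prevEnc X).length = X.length) ∧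
    (∀ (X : List Γ) (i : ℕ), 1 ≤ i → i ≤ X.length →
      prevEnc (X.take i) = (prevEnc X).take i) ∧
    (∀ X Y : List Γ, prevEnc X = prevEnc Y ↔
      ∃ e : Equiv.Perm Γ, Y = X.map ⇑e) := by
  refine ⟨?_, ?_, ?_⟩
  · intro X
    simp [prevEnc]
  · intro X i h1 h2
    have hlen : (X.take i).length = i := by simp [h2]
    rw [prevEnc_eq_map, prevEnc_eq_map, hlen, ← List.map_take, List.take_range,
      Nat.min_eq_left h2]
    apply List.map_congr_left
    intro k hk
    have hki : k < i := List.mem_range.mp hk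
    apply prevEncF_congr
    intro j hjk
    have hj : (X.take i)[j]? = X[j]? := by
      rw [List.getElem?_take, if_pos (by omega)]
    have hk' : (X.take i)[k]? = X[k]? := by
      rw [List.getElem?_take, if_pos hki]
    rw [hj, hk']
  · intro X Y
    constructor
    · intro h
      have hlen : X.length = Y.length := by
        have := congrArg List.length h
        simpa [prevEnc] using this
      have hF : ∀ k < X.length, prevEncF X k = prevEncF Y k := by
        intro k hk
        have h1 : (prevEnc X)[k]? = some (prevEncF X k) := by
          rw [prevEnc_eq_map, List.getElem?_map, List.getElem?_range hk]
          rfl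
        have h2 : (prevEnc Y)[k]? = some (prevEncF Y k) := by
          rw [prevEnc_eq_map, List.getElem?_map, List.getElem?_range (hlen ▸ hk)]
          rfl
        rw [h, h2] at h1
        exact (Option.some.inj h1).symm
      exact exists_perm_of_pattern hlen
        (pattern_full hlen (pattern_of_prevEncF hF))
    · rintro ⟨e, rfl⟩
      rw [prevEnc_eq_map, prevEnc_eq_map, List.length_map]
      apply List.map_congr_left
      intro k _
      apply prevEncF_congr
      intro j _
      rw [List.getElem?_map, List.getElem?_map]
      exact ((Option.map_injective e.injective).eq_iff).symm
end

section
/- (Well-definedness of the output function.) Let ≈ be an SCER on strings over Σ, f a prefix encoding with respect to ≈, and D a dictionary. If P, P' ∈ D, 1 ≤ j ≤ |P|, 1 ≤ j' ≤ |P'|, and f(P)[:j] = f(P')[:j'], then {Q ∈ D | Q ≈ P[i:j] for some 1 ≤ i ≤ j} = {Q ∈ D | Q ≈ P'[i':j'] for some 1 ≤ i' ≤ j'}; that is, the output set Out depends only on the state f(P)[:j] and not on the representative pattern and position. -/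
/-- Well-definedness of the output function.  Let `R` be an SCER, `f` a prefix
encoding w.r.t. `R`, and `D` a dictionary.  If `P, P' ∈ D`, `1 ≤ j ≤ |P|`,
`1 ≤ j' ≤ |P'|` and `f(P)[:j] = f(P')[:j']`, then
`{Q ∈ D | Q ≈ P[i:j] for some 1 ≤ i ≤ j} =
 {Q ∈ D | Q ≈ P'[i':j'] for some 1 ≤ i' ≤ j'}`;
the output set depends only on the state. -/
theorem out_well_defined {σ π : Type*} (R : List σ → List σ → Prop)
    (hequiv : Equivalence R)
    (hlen : ∀ X Y, R X Y → X.length = Y.length)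
    (hsub : ∀ X Y, R X Y → ∀ i j, 1 ≤ i → i ≤ j → j ≤ X.length →
      R (seg X i j) (seg Y i j))
    (f : List σ → List π)
    (hf1 : ∀ X, (f X).length = X.length)
    (hf2 : ∀ (X : List σ) (i : ℕ), 1 ≤ i → i ≤ X.length →
      f (X.take i) = (f X).take i)
    (hf3 : ∀ X Y, f X = f Y ↔ R X Y)
    (D : Finset (List σ))
    (P P' : List σ) (hP : P ∈ D) (hP' : P' ∈ D) (j j' : ℕ)
    (hj : 1 ≤ j) (hjP : j ≤ P.length) (hj' : 1 ≤ j') (hj'P : j' ≤ P'.length)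
    (heq : (f P).take j = (f P').take j') :
    {Q | Q ∈ D ∧ ∃ i, 1 ≤ i ∧ i ≤ j ∧ R Q (seg P i j)} =
      {Q | Q ∈ D ∧ ∃ i', 1 ≤ i' ∧ i' ≤ j' ∧ R Q (seg P' i' j')} := by
  have hfP := hf1 P
  have hfP' := hf1 P'
  have hjj' : j = j' := by
    have h1 : ((f P).take j).length = j := by
      rw [List.length_take]; omega
    have h2 : ((f P').take j').length = j' := by
      rw [List.length_take]; omega
    rw [heq] at h1; omega
  subst hjj'
  have hR : R (P.take j) (P'.take j) := by
    rw [← hf3]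
    rw [hf2 P j hj hjP, hf2 P' j hj' hj'P, heq]
  have hseg : ∀ i, 1 ≤ i → i ≤ j → R (seg P i j) (seg P' i j) := by
    intro i h1 h2
    have := hsub _ _ hR i j h1 h2 (by rw [List.length_take]; omega)
    simpa [seg, List.take_take] using this
  ext Q
  simp only [Set.mem_setOf_eq]
  constructor
  · rintro ⟨hQ, i, h1, h2, h3⟩
    exact ⟨hQ, i, h1, h2, hequiv.trans h3 (hseg i h1 h2)⟩
  · rintro ⟨hQ, i, h1, h2, h3⟩
    exact ⟨hQ, i, h1, h2, hequiv.trans h3 (hequiv.symm (hseg i h1 h2))⟩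
end
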